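/- 4/3-approximation of GPA for OSSA: let ℓ be the allocation produced by the GPA policy with thresholds γ_i = min{1, p·c_i/(3·w_i)} for each i (interpreted as γ_i = 1 when w_i = 0). Then for every feasible offline allocation ℓ* (nonnegative, with Σ_i Σ_t ℓ*_i^t ≤ s), cost(ℓ) ≤ (4/3)·cost(ℓ*) + Σ_{i=1}^n 3p·(b_i + c_i). -/

import Mathlib

open Finset

/-- `stock b d ℓ t` is the post-replenishment stock `k^{t+1}` at a single site
(with `stock b d ℓ 0 = k^1 = b`), under demands `d` and allocations `ℓ`. -/
noncomputable def stock (b : ℕ) (d : ℕ → ℕ) (ℓ : ℕ → ℝ) : ℕ → ℝ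
  | 0 => (b : ℝ)
  | t + 1 => max (stock b d ℓ t - (d (t + 1) : ℝ)) 0 + ℓ (t + 1)

/-- Sitewise transport cost `Σ_{t=1}^T w_i ⌈ℓ_i^t / c_i⌉`. -/
noncomputable def transportCost (T : ℕ) (wi : ℝ) (ci : ℕ) (ℓ : ℕ → ℝ) : ℝ :=
  ∑ t ∈ Icc 1 T, wi * (⌈ℓ t / (ci : ℝ)⌉ : ℝ)

/-- Sitewise lost-sales penalty `Σ_{t=1}^T p (d_i^t − k_i^t)_+`. -/
noncomputable def penaltyCost (T : ℕ) (p : ℝ) (b : ℕ) (d : ℕ → ℕ) (ℓ : ℕ → ℝ) : ℝ :=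
  ∑ t ∈ Icc 1 T, p * max ((d t : ℝ) - stock b d ℓ (t - 1)) 0

/-- Total cost of an allocation. -/
noncomputable def totalCost {n : ℕ} (T : ℕ) (w : Fin n → ℝ) (c b : Fin n → ℕ)
    (p : ℝ) (d : Fin n → ℕ → ℕ) (ℓ : Fin n → ℕ → ℝ) : ℝ :=
  ∑ i, (transportCost T (w i) (c i) (ℓ i) + penaltyCost T p (b i) (d i) (ℓ i))

/-- One time step of GPA: eligible sites are processed in index order; site `i` is
eligible if `r i < b i` and `Lprev i ≤ γ i * Dt i`; an eligible site requests
`⌈(b i − r i)/c i⌉` full shipments and receives the min of that and the remaining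
hub supply. Returns the remaining supply and the per-site allocation. -/
noncomputable def gpaInner {n : ℕ} (b c : Fin n → ℕ) (γ : Fin n → ℝ)
    (Dt Lprev r : Fin n → ℕ) (rem : ℕ) : ℕ × (Fin n → ℕ) :=
  (List.finRange n).foldl
    (fun (st : ℕ × (Fin n → ℕ)) (i : Fin n) =>
      if r i < b i ∧ (Lprev i : ℝ) ≤ γ i * (Dt i : ℝ) then
        let q : ℕ := (b i - r i + c i - 1) / c i
        let give : ℕ := min st.1 (c i * q)
        (st.1 - give, Function.update st.2 i give)
      else st)
    (rem, fun _ => 0)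

/-- GPA state after `t` time steps: (remaining hub supply, current stocks `k^{t+1}`,
cumulative allocations `L^t`). Initially `(s, b, 0)`. -/
noncomputable def gpaState {n : ℕ} (b c : Fin n → ℕ) (γ : Fin n → ℝ)
    (d : Fin n → ℕ → ℕ) (s : ℕ) : ℕ → ℕ × (Fin n → ℕ) × (Fin n → ℕ)
  | 0 => (s, b, fun _ => 0)
  | t + 1 =>
    let st := gpaState b c γ d s t
    let r : Fin n → ℕ := fun i => st.2.1 i - d i (t + 1)
    let Dt : Fin n → ℕ := fun i => ∑ u ∈ Icc 1 (t + 1), d i u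
    let res := gpaInner b c γ Dt st.2.2 r st.1
    (res.1, fun i => r i + res.2 i, fun i => st.2.2 i + res.2 i)

/-- Cumulative GPA allocation `L_i^t`. -/
noncomputable def gpaL {n : ℕ} (b c : Fin n → ℕ) (γ : Fin n → ℝ)
    (d : Fin n → ℕ → ℕ) (s : ℕ) (i : Fin n) (t : ℕ) : ℕ :=
  (gpaState b c γ d s t).2.2 i

/-- Per-step GPA allocation `ℓ_i^t` (as a real number). -/
noncomputable def gpaAlloc {n : ℕ} (b c : Fin n → ℕ) (γ : Fin n → ℝ)
    (d : Fin n → ℕ → ℕ) (s : ℕ) (i : Fin n) (t : ℕ) : ℝ :=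
  ((gpaL b c γ d s i t - gpaL b c γ d s i (t - 1) : ℕ) : ℝ)

section Helpers

lemma nat_cast_sub_max (a b : ℕ) : ((a - b : ℕ) : ℝ) = max ((a : ℝ) - b) 0 := by
  rcases le_total a b with h | h
  · rw [Nat.sub_eq_zero_of_le h, max_eq_right (sub_nonpos.mpr (by exact_mod_cast h : (a:ℝ) ≤ b))]
    simp
  · rw [Nat.cast_sub h, max_eq_left]
    exact sub_nonneg.mpr (by exact_mod_cast h)

lemma max_sub_flip (x y : ℝ) : max (x - y) 0 = x - y + max (y - x) 0 := by
  rcases le_total x y with h | h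
  · rw [max_eq_right (sub_nonpos.mpr h), max_eq_left (sub_nonneg.mpr h)]; ring
  · rw [max_eq_left (sub_nonneg.mpr h), max_eq_right (sub_nonpos.mpr h)]; ring

lemma ceil_q_ge (m c : ℕ) (hc : 1 ≤ c) : m ≤ c * ((m + c - 1) / c) := by
  have h1 := Nat.div_add_mod (m + c - 1) c
  have h2 : (m + c - 1) % c < c := Nat.mod_lt _ hc
  omega

lemma ceil_q_le (m c : ℕ) : c * ((m + c - 1) / c) ≤ m + c - 1 := by
  rw [mul_comm]; exact Nat.div_mul_le_self _ _

lemma sum_Icc_telescope (f : ℕ → ℝ) (a : ℕ) :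
    ∀ b, a ≤ b → ∑ t ∈ Finset.Icc (a + 1) b, (f t - f (t - 1)) = f b - f a := by
  intro b
  induction b with
  | zero => intro h; interval_cases a; simp
  | succ b ih =>
    intro h
    rcases Nat.lt_or_ge a (b + 1) with h' | h'
    · have hab : a ≤ b := by omega
      rw [Finset.sum_Icc_succ_top (by omega), ih hab]
      simp
    · have : a = b + 1 := by omega
      subst this; simp

end Helpers
section Fold

variable {n : ℕ}

/-- abstract step function of `gpaInner` -/
def innerF (P : Fin n → Prop) [DecidablePred P] (g : Fin n → ℕ)
    (st : ℕ × (Fin n → ℕ)) (i : Fin n) : ℕ × (Fin n → ℕ) :=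
  if P i then (st.1 - min st.1 (g i), Function.update st.2 i (min st.1 (g i))) else st

lemma innerF_fst_le (P : Fin n → Prop) [DecidablePred P] (g : Fin n → ℕ)
    (st : ℕ × (Fin n → ℕ)) (i : Fin n) : (innerF P g st i).1 ≤ st.1 := by
  unfold innerF; split <;> simp

lemma foldl_innerF_fst_le (P : Fin n → Prop) [DecidablePred P] (g : Fin n → ℕ) :
    ∀ (l : List (Fin n)) (st : ℕ × (Fin n → ℕ)),
      (l.foldl (innerF P g) st).1 ≤ st.1 := by
  intro l
  induction l with
  | nil => intro st; simp
  | cons i tl ih =>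
    intro st
    simp only [List.foldl_cons]
    exact le_trans (ih _) (innerF_fst_le P g st i)

lemma foldl_innerF_not_mem (P : Fin n → Prop) [DecidablePred P] (g : Fin n → ℕ) :
    ∀ (l : List (Fin n)) (st : ℕ × (Fin n → ℕ)) (j : Fin n), j ∉ l →
      (l.foldl (innerF P g) st).2 j = st.2 j := by
  intro l
  induction l with
  | nil => intro st j _; rfl
  | cons i tl ih =>
    intro st j hj
    simp only [List.mem_cons, not_or] at hj
    simp only [List.foldl_cons]
    rw [ih _ j hj.2]
    unfold innerF; split
    · simp [Function.update_of_ne hj.1]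
    · rfl

lemma foldl_innerF_mem (P : Fin n → Prop) [DecidablePred P] (g : Fin n → ℕ) :
    ∀ (l : List (Fin n)) (st : ℕ × (Fin n → ℕ)) (j : Fin n), j ∈ l → l.Nodup →
      ((¬ P j ∧ (l.foldl (innerF P g) st).2 j = st.2 j) ∨
        (P j ∧ ∃ a ≤ st.1, (l.foldl (innerF P g) st).2 j = min a (g j))) := by
  intro l
  induction l with
  | nil => intro st j hj; simp at hj
  | cons i tl ih =>
    intro st j hj hnd
    rw [List.nodup_cons] at hnd
    simp only [List.foldl_cons]
    rcases List.mem_cons.mp hj with rfl | hjtl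
    · -- j is the head, j ∉ tl
      rw [foldl_innerF_not_mem P g tl _ j hnd.1]
      unfold innerF
      by_cases hP : P j
      · right
        refine ⟨hP, st.1, le_refl _, ?_⟩
        rw [if_pos hP]; simp
      · left
        refine ⟨hP, ?_⟩
        rw [if_neg hP]
    · -- j in tail
      rcases ih (innerF P g st i) j hjtl hnd.2 with ⟨hP, heq⟩ | ⟨hP, a, ha, heq⟩
      · left
        refine ⟨hP, ?_⟩
        rw [heq]
        unfold innerF; split
        · have hij : i ≠ j := fun h => hnd.1 (h ▸ hjtl)
          simp [Function.update_of_ne (Ne.symm hij)]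
        · rfl
      · right
        exact ⟨hP, a, le_trans ha (innerF_fst_le P g st i), heq⟩

lemma foldl_innerF_full_or_zero (P : Fin n → Prop) [DecidablePred P] (g : Fin n → ℕ) :
    ∀ (l : List (Fin n)) (st : ℕ × (Fin n → ℕ)) (j : Fin n), j ∈ l → l.Nodup → P j →
      (l.foldl (innerF P g) st).2 j = g j ∨ (l.foldl (innerF P g) st).1 = 0 := by
  intro l
  induction l with
  | nil => intro st j hj; simp at hj
  | cons i tl ih =>
    intro st j hj hnd hP
    rw [List.nodup_cons] at hnd
    simp only [List.foldl_cons]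
    rcases List.mem_cons.mp hj with rfl | hjtl
    · rcases le_total (g j) st.1 with hle | hle
      · left
        rw [foldl_innerF_not_mem P g tl _ j hnd.1]
        unfold innerF
        rw [if_pos hP]
        simp [min_eq_right hle]
      · right
        have h1 : (innerF P g st j).1 = 0 := by
          unfold innerF
          rw [if_pos hP]
          simp [min_eq_left hle]
        have := foldl_innerF_fst_le P g tl (innerF P g st j)
        omega
    · exact ih _ j hjtl hnd.2 hP

lemma foldl_innerF_sum (P : Fin n → Prop) [DecidablePred P] (g : Fin n → ℕ) :
    ∀ (l : List (Fin n)) (st : ℕ × (Fin n → ℕ)), l.Nodup → (∀ j ∈ l, st.2 j = 0) →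
      (l.foldl (innerF P g) st).1 + ∑ j ∈ l.toFinset, (l.foldl (innerF P g) st).2 j
        = st.1 := by
  intro l
  induction l with
  | nil => intro st _ _; simp
  | cons i tl ih =>
    intro st hnd hz
    rw [List.nodup_cons] at hnd
    simp only [List.foldl_cons, List.toFinset_cons]
    have hnotmem : i ∉ tl.toFinset := by simpa using hnd.1
    rw [Finset.sum_insert hnotmem]
    have hz' : ∀ j ∈ tl, (innerF P g st i).2 j = 0 := by
      intro j hj
      have hij : i ≠ j := fun h => hnd.1 (h ▸ hj)
      have : st.2 j = 0 := hz j (List.mem_cons_of_mem _ hj)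
      unfold innerF; split
      · simpa [Function.update_of_ne (Ne.symm hij)]
      · exact this
    have hrest := ih (innerF P g st i) hnd.2 hz'
    have hival : (tl.foldl (innerF P g) (innerF P g st i)).2 i = (innerF P g st i).2 i :=
      foldl_innerF_not_mem P g tl _ i hnd.1
    rw [hival]
    have hstep : (innerF P g st i).1 + (innerF P g st i).2 i = st.1 := by
      have hzi : st.2 i = 0 := hz i List.mem_cons_self
      unfold innerF
      by_cases hP : P i
      · rw [if_pos hP]
        simp only [Function.update_self]
        have : min st.1 (g i) ≤ st.1 := min_le_left _ _
        omega
      · rw [if_neg hP]; simpa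
    generalize hA : (List.foldl (innerF P g) (innerF P g st i) tl) = A at *
    generalize hB : innerF P g st i = B at *
    omega

end Fold
section StateLemmas

variable {n : ℕ}

/-- eligibility predicate at a step -/
def elig (b : Fin n → ℕ) (γ : Fin n → ℝ) (Dt Lprev r : Fin n → ℕ) (i : Fin n) : Prop :=
  r i < b i ∧ (Lprev i : ℝ) ≤ γ i * (Dt i : ℝ)

noncomputable instance (b : Fin n → ℕ) (γ : Fin n → ℝ) (Dt Lprev r : Fin n → ℕ) :
    DecidablePred (elig b γ Dt Lprev r) := fun _ => instDecidableAnd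

/-- requested amount -/
def reqg (b c r : Fin n → ℕ) (i : Fin n) : ℕ := c i * ((b i - r i + c i - 1) / c i)

lemma gpaInner_eq_foldl (b c : Fin n → ℕ) (γ : Fin n → ℝ) (Dt Lprev r : Fin n → ℕ) (rem : ℕ) :
    gpaInner b c γ Dt Lprev r rem =
      (List.finRange n).foldl (innerF (elig b γ Dt Lprev r) (reqg b c r)) (rem, fun _ => 0) := rfl

variable (b c : Fin n → ℕ) (γ : Fin n → ℝ) (d : Fin n → ℕ → ℕ) (s : ℕ)

/-- stock after step `t` (`k^{t+1}`) -/
noncomputable def kk (t : ℕ) (i : Fin n) : ℕ := (gpaState b c γ d s t).2.1 i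

/-- remaining supply after step `t` -/
noncomputable def remS (t : ℕ) : ℕ := (gpaState b c γ d s t).1

/-- post-demand stock in step `t+1` -/
noncomputable def rAt (t : ℕ) (i : Fin n) : ℕ := kk b c γ d s t i - d i (t + 1)

/-- cumulative demand -/
def Dcum (i : Fin n) (t : ℕ) : ℕ := ∑ u ∈ Icc 1 t, d i u

/-- eligibility in step `t+1` -/
noncomputable def eligAt (t : ℕ) : Fin n → Prop :=
  elig b γ (fun i => Dcum d i (t + 1)) (fun i => gpaL b c γ d s i t) (rAt b c γ d s t)

noncomputable instance eligAtDec (t : ℕ) : DecidablePred (eligAt b c γ d s t) :=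
  fun i => inferInstanceAs (Decidable (elig _ _ _ _ _ i))

/-- the inner result of step `t+1` -/
noncomputable def stepRes (t : ℕ) : ℕ × (Fin n → ℕ) :=
  gpaInner b c γ (fun i => Dcum d i (t + 1)) (fun i => gpaL b c γ d s i t)
    (rAt b c γ d s t) (remS b c γ d s t)

lemma gpaL_succ (t : ℕ) (i : Fin n) :
    gpaL b c γ d s i (t + 1) = gpaL b c γ d s i t + (stepRes b c γ d s t).2 i := rfl

lemma kk_succ (t : ℕ) (i : Fin n) :
    kk b c γ d s (t + 1) i = rAt b c γ d s t i + (stepRes b c γ d s t).2 i := rfl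

lemma remS_succ (t : ℕ) :
    remS b c γ d s (t + 1) = (stepRes b c γ d s t).1 := rfl

lemma kk_zero (i : Fin n) : kk b c γ d s 0 i = b i := rfl
lemma gpaL_zero (i : Fin n) : gpaL b c γ d s i 0 = 0 := rfl
lemma remS_zero : remS b c γ d s 0 = s := rfl

/-- step result via the abstract fold -/
lemma stepRes_eq_foldl (t : ℕ) :
    stepRes b c γ d s t =
      (List.finRange n).foldl
        (innerF (eligAt b c γ d s t) (reqg b c (rAt b c γ d s t)))
        (remS b c γ d s t, fun _ => 0) := rfl

lemma give_of_not_elig (t : ℕ) (i : Fin n) (h : ¬ eligAt b c γ d s t i) :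
    (stepRes b c γ d s t).2 i = 0 := by
  rw [stepRes_eq_foldl]
  rcases foldl_innerF_mem (eligAt b c γ d s t) (reqg b c (rAt b c γ d s t)) (List.finRange n) _ i (List.mem_finRange i)
      (List.nodup_finRange n) with ⟨_, h2⟩ | ⟨h1, _⟩
  · exact h2
  · exact absurd h1 h

lemma give_le_reqg (t : ℕ) (i : Fin n) :
    (stepRes b c γ d s t).2 i ≤ reqg b c (rAt b c γ d s t) i := by
  rw [stepRes_eq_foldl]
  rcases foldl_innerF_mem (eligAt b c γ d s t) (reqg b c (rAt b c γ d s t)) (List.finRange n) _ i (List.mem_finRange i)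
      (List.nodup_finRange n) with ⟨_, h2⟩ | ⟨_, a, _, h2⟩
  · rw [h2]; exact Nat.zero_le _
  · rw [h2]; exact min_le_right _ _

lemma give_of_rem_zero (t : ℕ) (i : Fin n) (h : remS b c γ d s t = 0) :
    (stepRes b c γ d s t).2 i = 0 := by
  rw [stepRes_eq_foldl]
  rcases foldl_innerF_mem (eligAt b c γ d s t) (reqg b c (rAt b c γ d s t)) (List.finRange n) _ i (List.mem_finRange i)
      (List.nodup_finRange n) with ⟨_, h2⟩ | ⟨_, a, ha, h2⟩
  · exact h2
  · rw [h2]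
    rw [h] at ha
    simp [Nat.le_zero.mp ha]

lemma give_full_or_exhaust (t : ℕ) (i : Fin n) (h : eligAt b c γ d s t i) :
    (stepRes b c γ d s t).2 i = reqg b c (rAt b c γ d s t) i ∨ (stepRes b c γ d s t).1 = 0 := by
  rw [stepRes_eq_foldl]
  exact foldl_innerF_full_or_zero (eligAt b c γ d s t) (reqg b c (rAt b c γ d s t)) (List.finRange n) _ i (List.mem_finRange i)
      (List.nodup_finRange n) h

lemma stepRes_sum (t : ℕ) :
    (stepRes b c γ d s t).1 + ∑ i, (stepRes b c γ d s t).2 i = remS b c γ d s t := by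
  rw [stepRes_eq_foldl]
  have := foldl_innerF_sum (eligAt b c γ d s t) (reqg b c (rAt b c γ d s t))
      (List.finRange n) (remS b c γ d s t, fun _ => 0) (List.nodup_finRange n)
      (fun j _ => rfl)
  rwa [List.toFinset_finRange] at this

lemma remS_succ_le (t : ℕ) : remS b c γ d s (t + 1) ≤ remS b c γ d s t := by
  rw [remS_succ, stepRes_eq_foldl]
  exact foldl_innerF_fst_le _ _ _ _

lemma remS_antitone {t t' : ℕ} (h : t ≤ t') : remS b c γ d s t' ≤ remS b c γ d s t := by
  induction t' with
  | zero => simp_all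
  | succ u ih =>
    rcases Nat.lt_or_ge t (u + 1) with h' | h'
    · exact le_trans (remS_succ_le b c γ d s u) (ih (by omega))
    · have : t = u + 1 := by omega
      subst this; rfl

lemma remS_add_sumL (t : ℕ) :
    remS b c γ d s t + ∑ i, gpaL b c γ d s i t = s := by
  induction t with
  | zero => simp [remS_zero, gpaL_zero]
  | succ u ih =>
    rw [remS_succ]
    have hsum := stepRes_sum b c γ d s u
    calc (stepRes b c γ d s u).1 + ∑ i, gpaL b c γ d s i (u + 1)
        = (stepRes b c γ d s u).1 + ∑ i, (gpaL b c γ d s i u + (stepRes b c γ d s u).2 i) := by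
          simp [gpaL_succ]
      _ = ((stepRes b c γ d s u).1 + ∑ i, (stepRes b c γ d s u).2 i) + ∑ i, gpaL b c γ d s i u := by
          rw [Finset.sum_add_distrib]; ring
      _ = remS b c γ d s u + ∑ i, gpaL b c γ d s i u := by rw [hsum]
      _ = s := ih

lemma gpaL_mono (i : Fin n) {t t' : ℕ} (h : t ≤ t') :
    gpaL b c γ d s i t ≤ gpaL b c γ d s i t' := by
  induction t' with
  | zero => simp_all
  | succ u ih =>
    rcases Nat.lt_or_ge t (u + 1) with h' | h'
    · exact le_trans (ih (by omega)) (by rw [gpaL_succ]; omega)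
    · have : t = u + 1 := by omega
      subst this; rfl

lemma gpaAlloc_succ (t : ℕ) (i : Fin n) :
    gpaAlloc b c γ d s i (t + 1) = ((stepRes b c γ d s t).2 i : ℝ) := by
  unfold gpaAlloc
  rw [show t + 1 - 1 = t from rfl, gpaL_succ]
  congr 1
  omega

/-- stock bound `k ≤ b + c` -/
lemma kk_le (t : ℕ) (i : Fin n) : kk b c γ d s t i ≤ b i + c i := by
  induction t with
  | zero => rw [kk_zero]; omega
  | succ u ih =>
    rw [kk_succ]
    by_cases h : eligAt b c γ d s u i
    · have h1 := give_le_reqg b c γ d s u i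
      have h2 : reqg b c (rAt b c γ d s u) i ≤ b i - rAt b c γ d s u i + c i - 1 :=
        ceil_q_le _ _
      have h3 : rAt b c γ d s u i < b i := h.1
      omega
    · rw [give_of_not_elig b c γ d s u i h]
      unfold rAt at *
      omega

/-- identification of `stock` with the GPA stock -/
lemma stock_eq_kk (t : ℕ) (i : Fin n) :
    stock (b i) (d i) (gpaAlloc b c γ d s i) t = (kk b c γ d s t i : ℝ) := by
  induction t with
  | zero => rfl
  | succ u ih =>
    rw [show stock (b i) (d i) (gpaAlloc b c γ d s i) (u+1)
        = max (stock (b i) (d i) (gpaAlloc b c γ d s i) u - (d i (u + 1) : ℝ)) 0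
          + gpaAlloc b c γ d s i (u+1) from rfl]
    rw [ih, gpaAlloc_succ, kk_succ]
    rw [← nat_cast_sub_max]
    unfold rAt
    push_cast
    ring

end StateLemmas
section SiteLemmas

variable {n : ℕ} (b c : Fin n → ℕ) (γ : Fin n → ℝ) (d : Fin n → ℕ → ℕ) (s : ℕ)

lemma Dcum_succ (i : Fin n) (u : ℕ) :
    Dcum d i (u + 1) = Dcum d i u + d i (u + 1) := by
  unfold Dcum
  rw [Finset.sum_Icc_succ_top (by omega)]

lemma Dcum_mono (i : Fin n) {t t' : ℕ} (h : t ≤ t') : Dcum d i t ≤ Dcum d i t' := by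
  induction t' with
  | zero => simp_all
  | succ u ih =>
    rcases Nat.lt_or_ge t (u + 1) with h' | h'
    · rw [Dcum_succ]; exact le_trans (ih (by omega)) (by omega)
    · have : t = u + 1 := by omega
      subst this; rfl

/-- potential for telescoping -/
noncomputable def siteF (i : Fin n) (t : ℕ) : ℝ :=
  (Dcum d i t : ℝ) + (kk b c γ d s t i : ℝ) - (gpaL b c γ d s i t : ℝ)

lemma unmet_step (i : Fin n) (u : ℕ) :
    max ((d i (u + 1) : ℝ) - (kk b c γ d s u i : ℝ)) 0
      = siteF b c γ d s i (u + 1) - siteF b c γ d s i u := by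
  unfold siteF
  rw [Dcum_succ, kk_succ, gpaL_succ]
  push_cast
  unfold rAt
  rw [nat_cast_sub_max, max_sub_flip ((d i (u+1) : ℝ)) ((kk b c γ d s u i : ℝ))]
  ring

lemma unmet_interval (i : Fin n) (t0 T : ℕ) (h : t0 ≤ T) :
    ∑ t ∈ Icc (t0 + 1) T, max ((d i t : ℝ) - (kk b c γ d s (t - 1) i : ℝ)) 0
      = siteF b c γ d s i T - siteF b c γ d s i t0 := by
  rw [← sum_Icc_telescope (siteF b c γ d s i) t0 T h]
  apply Finset.sum_congr rfl
  intro t ht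
  rw [Finset.mem_Icc] at ht
  obtain ⟨u, rfl⟩ : ∃ u, t = u + 1 := ⟨t - 1, by omega⟩
  rw [show u + 1 - 1 = u from rfl]
  exact unmet_step b c γ d s i u

/-- penalty identity for GPA -/
lemma penalty_identity (p : ℝ) (i : Fin n) (T : ℕ) :
    penaltyCost T p (b i) (d i) (gpaAlloc b c γ d s i)
      = p * ((Dcum d i T : ℝ) - (b i : ℝ) + (kk b c γ d s T i : ℝ) - (gpaL b c γ d s i T : ℝ)) := by
  unfold penaltyCost
  rw [← Finset.mul_sum]
  congr 1
  have hcong : ∀ t ∈ Icc 1 T, max ((d i t : ℝ) - stock (b i) (d i) (gpaAlloc b c γ d s i) (t - 1)) 0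
      = max ((d i t : ℝ) - (kk b c γ d s (t - 1) i : ℝ)) 0 := by
    intro t _
    rw [stock_eq_kk]
  rw [Finset.sum_congr rfl hcong]
  have := unmet_interval b c γ d s i 0 T (Nat.zero_le T)
  rw [show (0:ℕ) + 1 = 1 from rfl] at this
  rw [this]
  unfold siteF
  rw [show Dcum d i 0 = 0 from rfl, kk_zero, gpaL_zero]
  push_cast
  ring

/-- Claim B : upper bound on cumulative allocation -/
lemma gpaL_upper (i : Fin n) (hγ0 : 0 ≤ γ i) (t : ℕ) :
    (gpaL b c γ d s i t : ℝ) ≤ γ i * (Dcum d i t : ℝ) + ((b i : ℝ) + (c i : ℝ)) := by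
  induction t with
  | zero =>
    rw [gpaL_zero, show Dcum d i 0 = 0 from rfl]
    simp
    positivity
  | succ u ih =>
    by_cases hg : (stepRes b c γ d s u).2 i = 0
    · rw [gpaL_succ, hg]
      have hD : (Dcum d i u : ℝ) ≤ (Dcum d i (u+1) : ℝ) := by
        exact_mod_cast Dcum_mono d i (Nat.le_succ u)
      have := mul_le_mul_of_nonneg_left hD hγ0
      simpa using le_trans ih (by linarith)
    · have helig : eligAt b c γ d s u i := by
        by_contra hne
        exact hg (give_of_not_elig b c γ d s u i hne)
      have hthresh : (gpaL b c γ d s i u : ℝ) ≤ γ i * ((Dcum d i (u+1) : ℕ) : ℝ) := helig.2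
      have hr : rAt b c γ d s u i < b i := helig.1
      have h1 := give_le_reqg b c γ d s u i
      have h2 : reqg b c (rAt b c γ d s u) i ≤ b i - rAt b c γ d s u i + c i - 1 := ceil_q_le _ _
      have h3 : (stepRes b c γ d s u).2 i ≤ b i + c i := by omega
      rw [gpaL_succ]
      push_cast
      have h4 : ((stepRes b c γ d s u).2 i : ℝ) ≤ (b i : ℝ) + c i := by exact_mod_cast h3
      linarith

/-- full grants when supply never exhausts by time T -/
lemma full_grant (T : ℕ) (hrem : remS b c γ d s T ≠ 0) (t : ℕ) (ht : t < T) (i : Fin n)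
    (h : eligAt b c γ d s t i) :
    (stepRes b c γ d s t).2 i = reqg b c (rAt b c γ d s t) i := by
  rcases give_full_or_exhaust b c γ d s t i h with h1 | h1
  · exact h1
  · exfalso
    apply hrem
    have h2 : remS b c γ d s (t+1) = 0 := by rw [remS_succ]; exact h1
    have := remS_antitone b c γ d s (show t + 1 ≤ T from ht)
    omega

/-- stocks stay at least `b` after unblocked fully-granted steps -/
lemma kk_ge_b (T : ℕ) (hrem : remS b c γ d s T ≠ 0) (i : Fin n) (hci : 1 ≤ c i) (t0 : ℕ)
    (hnb : ∀ u, t0 < u → u ≤ T → ¬ (γ i * (Dcum d i u : ℝ) < (gpaL b c γ d s i (u - 1) : ℝ)))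
    (u : ℕ) (hu1 : t0 < u) (hu2 : u ≤ T) :
    b i ≤ kk b c γ d s u i := by
  obtain ⟨v, rfl⟩ : ∃ v, u = v + 1 := ⟨u - 1, by omega⟩
  rw [kk_succ]
  rcases Nat.lt_or_ge (rAt b c γ d s v i) (b i) with hr | hr
  · have helig : eligAt b c γ d s v i := by
      refine ⟨hr, ?_⟩
      have h := hnb (v+1) hu1 hu2
      rw [show v + 1 - 1 = v from rfl] at h
      push_neg at h
      exact h
    rw [full_grant b c γ d s T hrem v (by omega) i helig]
    have h1 := ceil_q_ge (b i - rAt b c γ d s v i) (c i) hci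
    unfold reqg
    omega
  · omega

/-- Claim E'' : lower bound on cumulative allocation when supply never exhausts -/
lemma gpaL_lower (T : ℕ) (hrem : remS b c γ d s T ≠ 0) (i : Fin n)
    (hci : 1 ≤ c i) (hγ0 : 0 ≤ γ i) (hγ1 : γ i ≤ 1)
    (hd : ∀ t ∈ Icc 1 T, d i t ≤ b i) :
    γ i * (Dcum d i T : ℝ) ≤ (gpaL b c γ d s i T : ℝ) + γ i * (2 * (b i : ℝ) + (c i : ℝ)) := by
  have main : ∀ t0, t0 ≤ T →
      γ i * (Dcum d i t0 : ℝ) ≤ (gpaL b c γ d s i t0 : ℝ) →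
      (∀ u, t0 < u → u ≤ T → ¬ (γ i * (Dcum d i u : ℝ) < (gpaL b c γ d s i (u - 1) : ℝ))) →
      γ i * (Dcum d i T : ℝ) ≤ (gpaL b c γ d s i T : ℝ) + γ i * (2 * (b i : ℝ) + (c i : ℝ)) := by
    intro t0 ht0 hL0 hnb
    have hkge := kk_ge_b b c γ d s T hrem i hci t0 hnb
    have hsum : ∑ t ∈ Icc (t0 + 1) T, max ((d i t : ℝ) - (kk b c γ d s (t - 1) i : ℝ)) 0
        ≤ (b i : ℝ) := by
      have hle : ∀ t ∈ Icc (t0 + 1) T,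
          max ((d i t : ℝ) - (kk b c γ d s (t - 1) i : ℝ)) 0
            ≤ (if t = t0 + 1 then (b i : ℝ) else 0) := by
        intro t ht
        rw [Finset.mem_Icc] at ht
        by_cases hteq : t = t0 + 1
        · rw [if_pos hteq]
          have hdb : (d i t : ℝ) ≤ (b i : ℝ) := by
            exact_mod_cast hd t (Finset.mem_Icc.mpr ⟨by omega, ht.2⟩)
          have hk0 : (0:ℝ) ≤ (kk b c γ d s (t - 1) i : ℝ) := by positivity
          exact max_le (by linarith) (by positivity)
        · rw [if_neg hteq]
          have hk := hkge (t - 1) (by omega) (by omega)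
          have hdb : d i t ≤ b i := hd t (Finset.mem_Icc.mpr ⟨by omega, ht.2⟩)
          have hcast : (d i t : ℝ) - (kk b c γ d s (t - 1) i : ℝ) ≤ 0 := by
            have h' : d i t ≤ kk b c γ d s (t-1) i := le_trans hdb hk
            have := (Nat.cast_le (α := ℝ)).mpr h'
            linarith
          rw [max_eq_right hcast]
      calc ∑ t ∈ Icc (t0 + 1) T, max ((d i t : ℝ) - (kk b c γ d s (t - 1) i : ℝ)) 0
          ≤ ∑ t ∈ Icc (t0 + 1) T, (if t = t0 + 1 then (b i : ℝ) else 0) :=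
            Finset.sum_le_sum hle
        _ ≤ (b i : ℝ) := by
            rw [Finset.sum_ite_eq' (Icc (t0+1) T) (t0+1) (fun _ => (b i : ℝ))]
            split
            · exact le_refl _
            · positivity
    have hid := unmet_interval b c γ d s i t0 T ht0
    rw [hid] at hsum
    unfold siteF at hsum
    have hmono : (gpaL b c γ d s i t0 : ℝ) ≤ (gpaL b c γ d s i T : ℝ) := by
      exact_mod_cast gpaL_mono b c γ d s i ht0
    have hKT0 : (0:ℝ) ≤ (kk b c γ d s T i : ℝ) := by positivity
    have hK0le : (kk b c γ d s t0 i : ℝ) ≤ (b i : ℝ) + (c i : ℝ) := by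
      exact_mod_cast kk_le b c γ d s t0 i
    set DT := (Dcum d i T : ℝ)
    set D0 := (Dcum d i t0 : ℝ)
    set LT := (gpaL b c γ d s i T : ℝ)
    set L0 := (gpaL b c γ d s i t0 : ℝ)
    set KT := (kk b c γ d s T i : ℝ)
    set K0 := (kk b c γ d s t0 i : ℝ)
    have h1 : DT - D0 ≤ (b i : ℝ) + K0 - KT + (LT - L0) := by linarith
    have h2 : γ i * (DT - D0) ≤ γ i * ((b i : ℝ) + K0 - KT + (LT - L0)) :=
      mul_le_mul_of_nonneg_left h1 hγ0
    have h4 : γ i * ((b i : ℝ) + K0 - KT) ≤ γ i * (2 * (b i : ℝ) + (c i : ℝ)) :=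
      mul_le_mul_of_nonneg_left (by linarith) hγ0
    have h5 : γ i * (LT - L0) ≤ LT - L0 := by nlinarith [sub_nonneg.mpr hmono]
    nlinarith [hL0]
  by_cases hBs : ((Icc 1 T).filter
      (fun t => γ i * (Dcum d i t : ℝ) < (gpaL b c γ d s i (t - 1) : ℝ))).Nonempty
  · set Bs := (Icc 1 T).filter
      (fun t => γ i * (Dcum d i t : ℝ) < (gpaL b c γ d s i (t - 1) : ℝ)) with hBsdef
    set t0 := Bs.max' hBs with ht0def
    have ht0mem : t0 ∈ Bs := Bs.max'_mem hBs
    rw [hBsdef, Finset.mem_filter, Finset.mem_Icc] at ht0mem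
    refine main t0 ht0mem.1.2 ?_ ?_
    · have hblk := ht0mem.2
      have hm : (gpaL b c γ d s i (t0 - 1) : ℝ) ≤ (gpaL b c γ d s i t0 : ℝ) := by
        exact_mod_cast gpaL_mono b c γ d s i (Nat.sub_le t0 1)
      linarith
    · intro u hu1 hu2 hblk
      have humem : u ∈ Bs := by
        rw [hBsdef, Finset.mem_filter, Finset.mem_Icc]
        exact ⟨⟨by omega, hu2⟩, hblk⟩
      have := Bs.le_max' u humem
      omega
  · refine main 0 (Nat.zero_le T) ?_ ?_
    · rw [show Dcum d i 0 = 0 from rfl, gpaL_zero]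
      simp
    · intro u hu1 hu2 hblk
      apply hBs
      refine ⟨u, ?_⟩
      rw [Finset.mem_filter, Finset.mem_Icc]
      exact ⟨⟨by omega, hu2⟩, hblk⟩

end SiteLemmas
section TransportLemmas

variable {n : ℕ} (b c : Fin n → ℕ) (γ : Fin n → ℝ) (d : Fin n → ℕ → ℕ) (s : ℕ)

lemma gpaAlloc_eq_diff (i : Fin n) (u : ℕ) :
    gpaAlloc b c γ d s i (u + 1)
      = (gpaL b c γ d s i (u + 1) : ℝ) - (gpaL b c γ d s i u : ℝ) := by
  rw [gpaAlloc_succ, gpaL_succ]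
  push_cast
  ring

lemma sum_gpaAlloc (i : Fin n) (T : ℕ) :
    ∑ t ∈ Icc 1 T, gpaAlloc b c γ d s i t = (gpaL b c γ d s i T : ℝ) := by
  have h := sum_Icc_telescope (fun t => (gpaL b c γ d s i t : ℝ)) 0 T (Nat.zero_le T)
  rw [show (0:ℕ) + 1 = 1 from rfl] at h
  have hcong : ∀ t ∈ Icc 1 T, gpaAlloc b c γ d s i t
      = (gpaL b c γ d s i t : ℝ) - (gpaL b c γ d s i (t - 1) : ℝ) := by
    intro t ht
    rw [Finset.mem_Icc] at ht
    obtain ⟨u, rfl⟩ : ∃ u, t = u + 1 := ⟨t - 1, by omega⟩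
    rw [show u + 1 - 1 = u from rfl]
    exact gpaAlloc_eq_diff b c γ d s i u
  rw [Finset.sum_congr rfl hcong, h]
  simp [gpaL_zero]

lemma give_nondvd_rem_zero (u : ℕ) (i : Fin n)
    (h : ¬ (c i ∣ (stepRes b c γ d s u).2 i)) : remS b c γ d s (u + 1) = 0 := by
  by_cases helig : eligAt b c γ d s u i
  · rcases give_full_or_exhaust b c γ d s u i helig with h1 | h1
    · exfalso
      apply h
      rw [h1]
      exact Dvd.intro _ rfl
    · rw [remS_succ]; exact h1
  · exfalso
    apply h
    rw [give_of_not_elig b c γ d s u i helig]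
    exact dvd_zero _

lemma card_partial_le_one (i : Fin n) (T : ℕ) :
    ((Icc 1 T).filter (fun t => ¬ (c i ∣ (stepRes b c γ d s (t - 1)).2 i))).card ≤ 1 := by
  rw [Finset.card_le_one]
  have key : ∀ t1 ∈ (Icc 1 T).filter (fun t => ¬ (c i ∣ (stepRes b c γ d s (t - 1)).2 i)),
      ∀ t2 ∈ (Icc 1 T).filter (fun t => ¬ (c i ∣ (stepRes b c γ d s (t - 1)).2 i)),
      t1 < t2 → False := by
    intro t1 ht1 t2 ht2 hlt
    rw [Finset.mem_filter, Finset.mem_Icc] at ht1 ht2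
    have hz1 : remS b c γ d s t1 = 0 := by
      have := give_nondvd_rem_zero b c γ d s (t1 - 1) i ht1.2
      rwa [show t1 - 1 + 1 = t1 by omega] at this
    have hz2 : remS b c γ d s (t2 - 1) = 0 := by
      have := remS_antitone b c γ d s (show t1 ≤ t2 - 1 by omega)
      omega
    exact ht2.2 (by rw [give_of_rem_zero b c γ d s (t2-1) i hz2]; exact dvd_zero _)
  intro t1 ht1 t2 ht2
  rcases lt_trichotomy t1 t2 with h | h | h
  · exact absurd (key t1 ht1 t2 ht2 h) (fun h => h)
  · exact h
  · exact absurd (key t2 ht2 t1 ht1 h) (fun h => h)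

lemma transport_gpa_le (i : Fin n) (T : ℕ) (w : ℝ) (hw : 0 ≤ w) (hci : 1 ≤ c i) :
    transportCost T w (c i) (gpaAlloc b c γ d s i)
      ≤ (w / (c i : ℝ)) * (gpaL b c γ d s i T : ℝ) + w := by
  have hc0 : ((c i : ℝ)) ≠ 0 := by positivity
  have hterm : ∀ t ∈ Icc 1 T,
      w * ((⌈gpaAlloc b c γ d s i t / (c i : ℝ)⌉ : ℤ) : ℝ)
        ≤ (w / (c i : ℝ)) * gpaAlloc b c γ d s i t
          + (if ¬ (c i ∣ (stepRes b c γ d s (t - 1)).2 i) then w else 0) := by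
    intro t ht
    rw [Finset.mem_Icc] at ht
    obtain ⟨u, rfl⟩ : ∃ u, t = u + 1 := ⟨t - 1, by omega⟩
    rw [show u + 1 - 1 = u from rfl, gpaAlloc_succ]
    by_cases hdvd : c i ∣ (stepRes b c γ d s u).2 i
    · rw [if_neg (by simpa using hdvd), add_zero]
      obtain ⟨m, hm⟩ := hdvd
      have h1 : ((stepRes b c γ d s u).2 i : ℝ) / (c i : ℝ) = (m : ℝ) := by
        rw [hm]; push_cast; field_simp
      have h2 : (w / (c i : ℝ)) * ((stepRes b c γ d s u).2 i : ℝ) = w * (m : ℝ) := by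
        rw [hm]; push_cast; field_simp
      rw [h1, Int.ceil_natCast, h2]
      push_cast
      exact le_refl _
    · rw [if_pos (by simpa using hdvd)]
      have hceil : ((⌈((stepRes b c γ d s u).2 i : ℝ) / (c i : ℝ)⌉ : ℤ) : ℝ)
          ≤ ((stepRes b c γ d s u).2 i : ℝ) / (c i : ℝ) + 1 :=
        (Int.ceil_lt_add_one _).le
      have := mul_le_mul_of_nonneg_left hceil hw
      calc w * ((⌈((stepRes b c γ d s u).2 i : ℝ) / (c i : ℝ)⌉ : ℤ) : ℝ)
          ≤ w * (((stepRes b c γ d s u).2 i : ℝ) / (c i : ℝ) + 1) := this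
        _ = (w / (c i : ℝ)) * ((stepRes b c γ d s u).2 i : ℝ) + w := by
            field_simp
  unfold transportCost
  calc ∑ t ∈ Icc 1 T, w * ((⌈gpaAlloc b c γ d s i t / (c i : ℝ)⌉ : ℤ) : ℝ)
      ≤ ∑ t ∈ Icc 1 T, ((w / (c i : ℝ)) * gpaAlloc b c γ d s i t
          + (if ¬ (c i ∣ (stepRes b c γ d s (t - 1)).2 i) then w else 0)) :=
        Finset.sum_le_sum hterm
    _ = (w / (c i : ℝ)) * (gpaL b c γ d s i T : ℝ)
          + ∑ t ∈ Icc 1 T, (if ¬ (c i ∣ (stepRes b c γ d s (t - 1)).2 i) then w else 0) := by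
        rw [Finset.sum_add_distrib, ← Finset.mul_sum, sum_gpaAlloc]
    _ ≤ (w / (c i : ℝ)) * (gpaL b c γ d s i T : ℝ) + w := by
        have hcardR : (((Icc 1 T).filter (fun t => ¬ (c i ∣ (stepRes b c γ d s (t - 1)).2 i))).card : ℝ) ≤ 1 := by
          exact_mod_cast card_partial_le_one b c γ d s i T
        have h3 : ∑ t ∈ Icc 1 T, (if ¬ (c i ∣ (stepRes b c γ d s (t - 1)).2 i) then w else 0) ≤ w := by
          rw [Finset.sum_ite, Finset.sum_const, Finset.sum_const_zero, add_zero, nsmul_eq_mul]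
          calc (((Icc 1 T).filter (fun t => ¬ (c i ∣ (stepRes b c γ d s (t - 1)).2 i))).card : ℝ) * w
              ≤ 1 * w := mul_le_mul_of_nonneg_right hcardR hw
            _ = w := one_mul w
        linarith

end TransportLemmas
section OfflineLemmas

lemma offline_stock_nonneg (bi : ℕ) (di : ℕ → ℕ) (ℓf : ℕ → ℝ) (T : ℕ)
    (hf : ∀ t ∈ Icc 1 T, 0 ≤ ℓf t) : ∀ t, t ≤ T → 0 ≤ stock bi di ℓf t := by
  intro t
  induction t with
  | zero => intro _; rw [show stock bi di ℓf 0 = (bi:ℝ) from rfl]; positivity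
  | succ u _ =>
    intro hu
    rw [show stock bi di ℓf (u+1)
        = max (stock bi di ℓf u - (di (u + 1) : ℝ)) 0 + ℓf (u + 1) from rfl]
    have h1 : 0 ≤ ℓf (u + 1) := hf (u+1) (Finset.mem_Icc.mpr ⟨by omega, hu⟩)
    have h2 : (0:ℝ) ≤ max (stock bi di ℓf u - (di (u + 1) : ℝ)) 0 := le_max_right _ _
    linarith

lemma offline_penalty_identity (T : ℕ) (p : ℝ) (bi : ℕ) (di : ℕ → ℕ) (ℓf : ℕ → ℝ) :
    penaltyCost T p bi di ℓf
      = p * ((∑ t ∈ Icc 1 T, (di t : ℝ)) + stock bi di ℓf T - (bi : ℝ)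
          - ∑ t ∈ Icc 1 T, ℓf t) := by
  unfold penaltyCost
  have hcong : ∀ t ∈ Icc 1 T,
      p * max ((di t : ℝ) - stock bi di ℓf (t - 1)) 0
        = p * (di t : ℝ) + p * (stock bi di ℓf t - stock bi di ℓf (t - 1)) - p * ℓf t := by
    intro t ht
    rw [Finset.mem_Icc] at ht
    obtain ⟨u, rfl⟩ : ∃ u, t = u + 1 := ⟨t - 1, by omega⟩
    rw [show u + 1 - 1 = u from rfl]
    rw [max_sub_flip ((di (u+1) : ℝ)) (stock bi di ℓf u)]
    rw [show stock bi di ℓf (u+1)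
        = max (stock bi di ℓf u - (di (u + 1) : ℝ)) 0 + ℓf (u + 1) from rfl]
    ring
  rw [Finset.sum_congr rfl hcong]
  rw [Finset.sum_sub_distrib, Finset.sum_add_distrib]
  have htel := sum_Icc_telescope (fun t => p * stock bi di ℓf t) 0 T (Nat.zero_le T)
  rw [show (0:ℕ) + 1 = 1 from rfl] at htel
  have : ∑ t ∈ Icc 1 T, p * (stock bi di ℓf t - stock bi di ℓf (t - 1))
      = p * stock bi di ℓf T - p * stock bi di ℓf 0 := by
    rw [← htel]
    apply Finset.sum_congr rfl
    intro t _
    ring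
  rw [this, ← Finset.mul_sum, ← Finset.mul_sum]
  rw [show stock bi di ℓf 0 = (bi:ℝ) from rfl]
  ring

lemma offline_penalty_nonneg (T : ℕ) (p : ℝ) (bi : ℕ) (di : ℕ → ℕ) (ℓf : ℕ → ℝ)
    (hp : 0 ≤ p) : 0 ≤ penaltyCost T p bi di ℓf := by
  unfold penaltyCost
  apply Finset.sum_nonneg
  intro t _
  have : (0:ℝ) ≤ max ((di t : ℝ) - stock bi di ℓf (t - 1)) 0 := le_max_right _ _
  positivity

lemma offline_transport_ge (T : ℕ) (w : ℝ) (ci : ℕ) (ℓf : ℕ → ℝ)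
    (hw : 0 ≤ w) (hci : 1 ≤ ci) :
    (w / (ci : ℝ)) * (∑ t ∈ Icc 1 T, ℓf t) ≤ transportCost T w ci ℓf := by
  unfold transportCost
  rw [Finset.mul_sum]
  apply Finset.sum_le_sum
  intro t _
  have h1 : ℓf t / (ci : ℝ) ≤ ((⌈ℓf t / (ci : ℝ)⌉ : ℤ) : ℝ) := Int.le_ceil _
  calc (w / (ci : ℝ)) * ℓf t = w * (ℓf t / (ci : ℝ)) := by ring
    _ ≤ w * ((⌈ℓf t / (ci : ℝ)⌉ : ℤ) : ℝ) := mul_le_mul_of_nonneg_left h1 hw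

end OfflineLemmas
section ScalarLemmas

/-- facts about the GPA threshold -/
lemma gamma_facts (w p cR γv : ℝ) (hw : 0 ≤ w) (hp : 0 ≤ p) (hc : 0 < cR)
    (hγ : γv = if w = 0 then (1 : ℝ) else min 1 (p * cR / (3 * w))) :
    0 ≤ γv ∧ γv ≤ 1 ∧
      ((γv = 1 ∧ 3 * (w / cR) ≤ p) ∨ (3 * (w / cR) * γv = p ∧ p ≤ 3 * (w / cR))) := by
  by_cases hw0 : w = 0
  · rw [hγ, if_pos hw0]
    refine ⟨zero_le_one, le_refl 1, Or.inl ⟨rfl, ?_⟩⟩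
    rw [hw0]
    simp [hp]
  · have hwpos : 0 < w := lt_of_le_of_ne hw (Ne.symm hw0)
    rw [hγ, if_neg hw0]
    have hrat0 : 0 ≤ p * cR / (3 * w) := by positivity
    rcases le_total 1 (p * cR / (3 * w)) with h1 | h1
    · rw [min_eq_left h1]
      refine ⟨zero_le_one, le_refl 1, Or.inl ⟨rfl, ?_⟩⟩
      rw [le_div_iff₀ (by positivity : (0:ℝ) < 3 * w)] at h1
      rw [show 3 * (w / cR) = 3 * w / cR from by ring, div_le_iff₀ hc]
      nlinarith
    · rw [min_eq_right h1]
      refine ⟨hrat0, h1, Or.inr ⟨?_, ?_⟩⟩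
      · field_simp
      · rw [div_le_one (by positivity)] at h1
        rw [show 3 * (w / cR) = 3 * w / cR from by ring, le_div_iff₀ hc]
        linarith

/-- per-site inequality, non-exhaustion case -/
lemma site_nonexh_scalar (p ω γv bR cc D L K : ℝ)
    (hp : 0 ≤ p) (hω0 : 0 ≤ ω) (hωp : ω ≤ p) (hγ0 : 0 ≤ γv) (hγ1 : γv ≤ 1)
    (hcase : (γv = 1 ∧ 3 * ω ≤ p) ∨ (3 * ω * γv = p ∧ p ≤ 3 * ω))
    (hb : 0 ≤ bR) (hc : 0 ≤ cc) (hD : 0 ≤ D) (hL0 : 0 ≤ L) (hK0 : 0 ≤ K)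
    (hK : K ≤ bR + cc) (hlow : γv * D ≤ L + γv * (2 * bR + cc)) :
    ω * L + ω * cc + p * (D - bR - L + K)
      ≤ (4/3) * ω * (max (D - bR) 0) + 3 * p * (bR + cc) := by
  obtain ⟨E, hE⟩ : ∃ E, max (D - bR) 0 = E := ⟨_, rfl⟩
  rw [hE]
  have hE1 : D - bR ≤ E := hE ▸ le_max_left _ _
  have hE0 : (0:ℝ) ≤ E := hE ▸ le_max_right _ _
  obtain ⟨m, hm⟩ : ∃ m, m = p * (1 - γv) + ω * γv := ⟨_, rfl⟩
  have hm0 : 0 ≤ m := by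
    have : 0 ≤ p * (1 - γv) := mul_nonneg hp (by linarith)
    have : 0 ≤ ω * γv := mul_nonneg hω0 hγ0
    rw [hm]; linarith [mul_nonneg hp (by linarith : (0:ℝ) ≤ 1 - γv), mul_nonneg hω0 hγ0]
  have hmp : m ≤ p := by
    rw [hm]
    nlinarith [mul_nonneg hγ0 (by linarith : (0:ℝ) ≤ p - ω)]
  have hmω : m ≤ (4/3) * ω := by
    rcases hcase with ⟨h1, _⟩ | ⟨h1, _⟩
    · rw [hm, h1]; linarith
    · rw [hm]
      nlinarith [mul_nonneg hω0 (sq_nonneg (γv - 2/3))]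
  have h4 : (ω - p) * L ≤ (ω - p) * (γv * D - γv * (2 * bR + cc)) :=
    mul_le_mul_of_nonpos_left (by linarith) (by linarith)
  have heq : (ω - p) * (γv * D - γv * (2 * bR + cc))
      = m * D - p * D + (p - ω) * γv * (2 * bR + cc) := by
    rw [hm]; ring
  have h5 : (p - ω) * γv * (2 * bR + cc) ≤ p * (2 * bR + cc) := by
    have h5a : (p - ω) * γv ≤ p := by nlinarith [mul_nonneg hγ0 hω0]
    have := mul_le_mul_of_nonneg_right h5a (by linarith : (0:ℝ) ≤ 2 * bR + cc)
    linarith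
  have h6 : m * (D - bR) ≤ m * E := mul_le_mul_of_nonneg_left hE1 hm0
  have h7 : m * E ≤ (4/3) * ω * E := mul_le_mul_of_nonneg_right hmω hE0
  have h8 : m * bR ≤ p * bR := mul_le_mul_of_nonneg_right hmp hb
  have h9 : ω * cc ≤ p * cc := mul_le_mul_of_nonneg_right hωp hc
  have h10 : m * D = m * (D - bR) + m * bR := by ring
  linarith [h4, heq, h5, h6, h7, h8, h9, h10, mul_le_mul_of_nonneg_left hK hp]

/-- per-site inequality, exhaustion case -/
lemma site_exh_scalar (p ω γv bR cc D L K x : ℝ)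
    (hp : 0 ≤ p) (hω0 : 0 ≤ ω) (hωp : ω ≤ p) (hγ0 : 0 ≤ γv) (hγ1 : γv ≤ 1)
    (hcase : (γv = 1 ∧ 3 * ω ≤ p) ∨ (3 * ω * γv = p ∧ p ≤ 3 * ω))
    (hb : 0 ≤ bR) (hc : 0 ≤ cc) (hD : 0 ≤ D) (hL0 : 0 ≤ L) (hK0 : 0 ≤ K)
    (hK : K ≤ bR + cc) (hup : L ≤ γv * D + (bR + cc)) (hx : 0 ≤ x) :
    ω * L + ω * cc + p * (D - bR - L + K) + p * L
      ≤ (4/3) * (ω * x + p * (max (D - bR - x) 0)) + p * x + 3 * p * (bR + cc) := by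
  obtain ⟨E, hE⟩ : ∃ E, max (D - bR) 0 = E := ⟨_, rfl⟩
  have hE1 : D - bR ≤ E := hE ▸ le_max_left _ _
  have hE0 : (0:ℝ) ≤ E := hE ▸ le_max_right _ _
  have hωγ : ω * γv ≤ p / 3 := by
    rcases hcase with ⟨h1, h2⟩ | ⟨h1, _⟩
    · rw [h1]; linarith
    · linarith
  have hωγ0 : 0 ≤ ω * γv := mul_nonneg hω0 hγ0
  -- core inequality
  have core : (ω * γv + p) * E ≤ ((4/3) * ω + p) * x + (4/3) * p * (max (E - x) 0) := by
    rcases le_or_gt E x with hxE | hxE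
    · have hA : (ω * γv) * E ≤ ω * E :=
        mul_le_mul_of_nonneg_right (by nlinarith) hE0
      have hB : ω * E ≤ ω * x := mul_le_mul_of_nonneg_left hxE hω0
      have hC : p * E ≤ p * x := mul_le_mul_of_nonneg_left hxE hp
      have hD' : 0 ≤ (4/3) * p * (max (E - x) 0) := by
        have := le_max_right (E - x) (0:ℝ); positivity
      have hBx : 0 ≤ ω * x := mul_nonneg hω0 hx
      linarith
    · have hmx : max (E - x) 0 = E - x := max_eq_left (by linarith)
      rw [hmx]
      rcases le_or_gt p (4 * ω) with hpω | hpω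
      · have hA : (ω * γv) * E ≤ (p/3) * E := mul_le_mul_of_nonneg_right hωγ hE0
        have hB : 0 ≤ x * ((4/3) * ω - (1/3) * p) := mul_nonneg hx (by linarith)
        linarith
      · have hγeq : γv = 1 := by
          rcases hcase with ⟨h1, _⟩ | ⟨_, h2⟩
          · exact h1
          · linarith
        have hC : E * ((4/3) * ω - (1/3) * p) ≤ x * ((4/3) * ω - (1/3) * p) :=
          mul_le_mul_of_nonpos_right (le_of_lt hxE) (by linarith)
        have hEω : 0 ≤ E * ω := mul_nonneg hE0 hω0
        rw [hγeq]
        linarith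
  have hDE : D ≤ E + bR := by linarith
  have h1 : ω * L ≤ ω * γv * D + ω * (bR + cc) := by
    have := mul_le_mul_of_nonneg_left hup hω0
    linarith
  have h2 : ω * γv * D ≤ ω * γv * E + ω * γv * bR := by
    have := mul_le_mul_of_nonneg_left hDE hωγ0
    linarith
  have h3 : ω * γv * bR ≤ (p/3) * bR := mul_le_mul_of_nonneg_right hωγ hb
  have h4 : p * (D - bR) ≤ p * E := mul_le_mul_of_nonneg_left hE1 hp
  have h5 : ω * cc ≤ p * cc := mul_le_mul_of_nonneg_right hωp hc
  have h6 : p * K ≤ p * (bR + cc) := mul_le_mul_of_nonneg_left hK hp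
  have h7 : ω * (bR + cc) ≤ p * (bR + cc) := mul_le_mul_of_nonneg_right hωp (by linarith)
  have hmaxle : max (E - x) 0 ≤ max (D - bR - x) 0 := by
    rcases le_total D bR with hDb | hDb
    · have hE' : E = 0 := by rw [← hE]; exact max_eq_right (by linarith)
      rw [hE']
      have h0 : max ((0:ℝ) - x) 0 = 0 := max_eq_right (by linarith)
      rw [h0]
      exact le_max_right _ _
    · have hE' : E = D - bR := by rw [← hE]; exact max_eq_left (by linarith)
      rw [hE']
  have h8 : (4/3) * p * (max (E - x) 0) ≤ (4/3) * p * (max (D - bR - x) 0) := by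
    have hfac : (0:ℝ) ≤ (4/3) * p := by linarith
    exact mul_le_mul_of_nonneg_left hmaxle hfac
  linarith [core, h1, h2, h3, h4, h5, h6, h7, h8, mul_nonneg hp hb, mul_nonneg hp hc]

end ScalarLemmas
/-- **4/3-approximation of GPA for OSSA.** Run GPA with thresholds
`γ i = min{1, p·c_i/(3w_i)}` (interpreted as `1` when `w i = 0`). Then for every
feasible offline allocation `ℓ*`,
`cost(ℓ) ≤ (4/3)·cost(ℓ*) + Σ_i 3p(b_i + c_i)`. -/
theorem gpa_four_thirds_approximation
    (n T : ℕ) (c b : Fin n → ℕ) (hc : ∀ i, 1 ≤ c i)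
    (w : Fin n → ℝ) (hw : ∀ i, 0 ≤ w i)
    (p : ℝ) (hp : 0 ≤ p) (hwp : ∀ i, w i ≤ p * c i)
    (s : ℕ) (d : Fin n → ℕ → ℕ) (hd : ∀ i, ∀ t ∈ Icc 1 T, d i t ≤ b i)
    (γ : Fin n → ℝ)
    (hγdef : γ = fun i => if w i = 0 then (1 : ℝ) else min 1 (p * c i / (3 * w i)))
    (ℓ : Fin n → ℕ → ℝ) (hℓ : ℓ = fun i t => gpaAlloc b c γ d s i t)
    (ℓs : Fin n → ℕ → ℝ) (hℓs : ∀ i, ∀ t ∈ Icc 1 T, 0 ≤ ℓs i t)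
    (hfeas : ∑ i, ∑ t ∈ Icc 1 T, ℓs i t ≤ (s : ℝ))
    :
    totalCost T w c b p d ℓ
      ≤ (4 / 3) * totalCost T w c b p d ℓs
        + ∑ i, 3 * p * ((b i : ℝ) + c i) := by
  subst hℓ
  -- per-site quantities and common facts
  have hcR : ∀ i, (0:ℝ) < (c i : ℝ) := fun i => by exact_mod_cast hc i
  have hω0 : ∀ i, 0 ≤ w i / (c i : ℝ) := fun i => div_nonneg (hw i) (le_of_lt (hcR i))
  have hωp : ∀ i, w i / (c i : ℝ) ≤ p := fun i => by
    rw [div_le_iff₀ (hcR i)]; exact hwp i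
  have hγfacts : ∀ i, 0 ≤ γ i ∧ γ i ≤ 1 ∧
      ((γ i = 1 ∧ 3 * (w i / (c i : ℝ)) ≤ p) ∨
        (3 * (w i / (c i : ℝ)) * γ i = p ∧ p ≤ 3 * (w i / (c i : ℝ)))) := fun i =>
    gamma_facts (w i) p (c i) (γ i) (hw i) hp (hcR i) (by rw [hγdef])
  have hwi_eq : ∀ i, w i = (w i / (c i : ℝ)) * (c i : ℝ) := fun i =>
    (div_mul_cancel₀ (w i) (ne_of_gt (hcR i))).symm
  -- GPA cost bounds per site
  have htr : ∀ i, transportCost T (w i) (c i) (gpaAlloc b c γ d s i)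
      ≤ (w i / (c i : ℝ)) * (gpaL b c γ d s i T : ℝ) + (w i / (c i : ℝ)) * (c i : ℝ) := by
    intro i
    have := transport_gpa_le b c γ d s i T (w i) (hw i) (hc i)
    rw [← hwi_eq i]
    exact this
  have hpen : ∀ i, penaltyCost T p (b i) (d i) (gpaAlloc b c γ d s i)
      = p * ((Dcum d i T : ℝ) - (b i : ℝ) + (kk b c γ d s T i : ℝ) - (gpaL b c γ d s i T : ℝ)) :=
    fun i => penalty_identity b c γ d s p i T
  have hKle : ∀ i, ((kk b c γ d s T i : ℝ)) ≤ (b i : ℝ) + (c i : ℝ) := fun i => by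
    exact_mod_cast kk_le b c γ d s T i
  -- offline cost bounds per site
  have hx0 : ∀ i, 0 ≤ ∑ t ∈ Icc 1 T, ℓs i t := fun i =>
    Finset.sum_nonneg (fun t ht => hℓs i t ht)
  have htrs : ∀ i, (w i / (c i : ℝ)) * (∑ t ∈ Icc 1 T, ℓs i t)
      ≤ transportCost T (w i) (c i) (ℓs i) := fun i =>
    offline_transport_ge T (w i) (c i) (ℓs i) (hw i) (hc i)
  have hpens0 : ∀ i, 0 ≤ penaltyCost T p (b i) (d i) (ℓs i) := fun i =>
    offline_penalty_nonneg T p (b i) (d i) (ℓs i) hp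
  have hpens : ∀ i, p * ((Dcum d i T : ℝ) - (b i : ℝ) - ∑ t ∈ Icc 1 T, ℓs i t)
      ≤ penaltyCost T p (b i) (d i) (ℓs i) := by
    intro i
    rw [offline_penalty_identity T p (b i) (d i) (ℓs i)]
    have hst := offline_stock_nonneg (b i) (d i) (ℓs i) T (hℓs i) T (le_refl T)
    have hDc : ((Dcum d i T : ℕ) : ℝ) = ∑ t ∈ Icc 1 T, (d i t : ℝ) := by
      unfold Dcum; push_cast; rfl
    rw [← hDc]
    apply mul_le_mul_of_nonneg_left _ hp
    linarith
  have hpensmax : ∀ i, p * max ((Dcum d i T : ℝ) - (b i : ℝ) - ∑ t ∈ Icc 1 T, ℓs i t) 0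
      ≤ penaltyCost T p (b i) (d i) (ℓs i) := by
    intro i
    rcases le_total ((Dcum d i T : ℝ) - (b i : ℝ) - ∑ t ∈ Icc 1 T, ℓs i t) 0 with h | h
    · rw [max_eq_right h, mul_zero]; exact hpens0 i
    · rw [max_eq_left h]; exact hpens i
  have hcast0 : ∀ i, (0:ℝ) ≤ (Dcum d i T : ℝ) := fun i => Nat.cast_nonneg _
  have hLcast0 : ∀ i, (0:ℝ) ≤ (gpaL b c γ d s i T : ℝ) := fun i => Nat.cast_nonneg _
  have hKcast0 : ∀ i, (0:ℝ) ≤ (kk b c γ d s T i : ℝ) := fun i => Nat.cast_nonneg _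
  have hbcast0 : ∀ i, (0:ℝ) ≤ (b i : ℝ) := fun i => Nat.cast_nonneg _
  by_cases hrem : remS b c γ d s T = 0
  · -- exhaustion case
    have hLsum : ∑ i, ((gpaL b c γ d s i T : ℝ)) = (s : ℝ) := by
      have := remS_add_sumL b c γ d s T
      rw [hrem] at this
      have : (∑ i, gpaL b c γ d s i T : ℕ) = s := by omega
      exact_mod_cast this
    have key : ∀ i ∈ Finset.univ,
        (transportCost T (w i) (c i) (gpaAlloc b c γ d s i)
          + penaltyCost T p (b i) (d i) (gpaAlloc b c γ d s i))
          + p * (gpaL b c γ d s i T : ℝ)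
        ≤ (4/3) * (transportCost T (w i) (c i) (ℓs i) + penaltyCost T p (b i) (d i) (ℓs i))
          + p * (∑ t ∈ Icc 1 T, ℓs i t) + 3 * p * ((b i : ℝ) + (c i : ℝ)) := by
      intro i _
      obtain ⟨hγ0, hγ1, hcase⟩ := hγfacts i
      have hup : (gpaL b c γ d s i T : ℝ)
          ≤ γ i * (Dcum d i T : ℝ) + ((b i : ℝ) + (c i : ℝ)) := gpaL_upper b c γ d s i hγ0 T
      have hsc := site_exh_scalar p (w i / (c i : ℝ)) (γ i) (b i : ℝ) (c i : ℝ)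
        (Dcum d i T : ℝ) (gpaL b c γ d s i T : ℝ) (kk b c γ d s T i : ℝ)
        (∑ t ∈ Icc 1 T, ℓs i t)
        hp (hω0 i) (hωp i) hγ0 hγ1 hcase (hbcast0 i) (le_of_lt (hcR i)) (hcast0 i)
        (hLcast0 i) (hKcast0 i) (hKle i) hup (hx0 i)
      have hcomb : (4/3) * ((w i / (c i : ℝ)) * (∑ t ∈ Icc 1 T, ℓs i t)
          + p * (max ((Dcum d i T : ℝ) - (b i : ℝ) - ∑ t ∈ Icc 1 T, ℓs i t) 0))
          ≤ (4/3) * (transportCost T (w i) (c i) (ℓs i) + penaltyCost T p (b i) (d i) (ℓs i)) := by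
        have := add_le_add (htrs i) (hpensmax i)
        linarith
      have := htr i
      have := hpen i
      linarith [htr i, hpen i, hsc, hcomb]
    have hsum := Finset.sum_le_sum key
    have e1 : ∑ i, ((transportCost T (w i) (c i) (gpaAlloc b c γ d s i)
          + penaltyCost T p (b i) (d i) (gpaAlloc b c γ d s i))
          + p * (gpaL b c γ d s i T : ℝ))
        = (∑ i, (transportCost T (w i) (c i) (gpaAlloc b c γ d s i)
            + penaltyCost T p (b i) (d i) (gpaAlloc b c γ d s i)))
          + p * ∑ i, ((gpaL b c γ d s i T : ℝ)) := by
      rw [Finset.sum_add_distrib, Finset.mul_sum]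
    have e2 : ∑ i, ((4/3) * (transportCost T (w i) (c i) (ℓs i) + penaltyCost T p (b i) (d i) (ℓs i))
          + p * (∑ t ∈ Icc 1 T, ℓs i t) + 3 * p * ((b i : ℝ) + (c i : ℝ)))
        = (4/3) * (∑ i, (transportCost T (w i) (c i) (ℓs i) + penaltyCost T p (b i) (d i) (ℓs i)))
          + p * (∑ i, ∑ t ∈ Icc 1 T, ℓs i t) + ∑ i, 3 * p * ((b i : ℝ) + (c i : ℝ)) := by
      rw [Finset.sum_add_distrib, Finset.sum_add_distrib, Finset.mul_sum, Finset.mul_sum]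
    have hTC : totalCost T w c b p d (fun i t => gpaAlloc b c γ d s i t)
        = ∑ i, (transportCost T (w i) (c i) (gpaAlloc b c γ d s i)
            + penaltyCost T p (b i) (d i) (gpaAlloc b c γ d s i)) := rfl
    have hTCs : totalCost T w c b p d ℓs
        = ∑ i, (transportCost T (w i) (c i) (ℓs i) + penaltyCost T p (b i) (d i) (ℓs i)) := rfl
    rw [hTC, hTCs]
    have hfeas' : p * (∑ i, ∑ t ∈ Icc 1 T, ℓs i t) ≤ p * (s:ℝ) :=
      mul_le_mul_of_nonneg_left hfeas hp
    have hpL : p * ∑ i, ((gpaL b c γ d s i T : ℝ)) = p * (s:ℝ) := by rw [hLsum]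
    linarith [hsum, e1, e2, hpL]
  · -- non-exhaustion case
    have key : ∀ i ∈ Finset.univ,
        (transportCost T (w i) (c i) (gpaAlloc b c γ d s i)
          + penaltyCost T p (b i) (d i) (gpaAlloc b c γ d s i))
        ≤ (4/3) * (transportCost T (w i) (c i) (ℓs i) + penaltyCost T p (b i) (d i) (ℓs i))
          + 3 * p * ((b i : ℝ) + (c i : ℝ)) := by
      intro i _
      obtain ⟨hγ0, hγ1, hcase⟩ := hγfacts i
      have hlow : γ i * (Dcum d i T : ℝ)
          ≤ (gpaL b c γ d s i T : ℝ) + γ i * (2 * (b i : ℝ) + (c i : ℝ)) :=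
        gpaL_lower b c γ d s T hrem i (hc i) hγ0 hγ1 (hd i)
      have hsc := site_nonexh_scalar p (w i / (c i : ℝ)) (γ i) (b i : ℝ) (c i : ℝ)
        (Dcum d i T : ℝ) (gpaL b c γ d s i T : ℝ) (kk b c γ d s T i : ℝ)
        hp (hω0 i) (hωp i) hγ0 hγ1 hcase (hbcast0 i) (le_of_lt (hcR i)) (hcast0 i)
        (hLcast0 i) (hKcast0 i) (hKle i) hlow
      -- lower bound offline cost by (w/c) * max (D - b) 0
      have hopt : (w i / (c i : ℝ)) * max ((Dcum d i T : ℝ) - (b i : ℝ)) 0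
          ≤ transportCost T (w i) (c i) (ℓs i) + penaltyCost T p (b i) (d i) (ℓs i) := by
        rcases le_total ((Dcum d i T : ℝ) - (b i : ℝ)) 0 with hD0 | hD0
        · rw [max_eq_right hD0, mul_zero]
          have h1 : 0 ≤ (w i / (c i : ℝ)) * (∑ t ∈ Icc 1 T, ℓs i t) :=
            mul_nonneg (hω0 i) (hx0 i)
          linarith [htrs i, hpens0 i]
        · rw [max_eq_left hD0]
          rcases le_total ((Dcum d i T : ℝ) - (b i : ℝ)) (∑ t ∈ Icc 1 T, ℓs i t) with hxc | hxc
          · have h1 : (w i / (c i : ℝ)) * ((Dcum d i T : ℝ) - (b i : ℝ))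
                ≤ (w i / (c i : ℝ)) * (∑ t ∈ Icc 1 T, ℓs i t) :=
              mul_le_mul_of_nonneg_left hxc (hω0 i)
            linarith [htrs i, hpens0 i]
          · have h1 : (w i / (c i : ℝ)) * ((Dcum d i T : ℝ) - (b i : ℝ) - ∑ t ∈ Icc 1 T, ℓs i t)
                ≤ p * ((Dcum d i T : ℝ) - (b i : ℝ) - ∑ t ∈ Icc 1 T, ℓs i t) :=
              mul_le_mul_of_nonneg_right (hωp i) (by linarith)
            have h2 := hpens i
            have h3 := htrs i
            have heq : (w i / (c i : ℝ)) * ((Dcum d i T : ℝ) - (b i : ℝ))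
                = (w i / (c i : ℝ)) * (∑ t ∈ Icc 1 T, ℓs i t)
                  + (w i / (c i : ℝ)) * ((Dcum d i T : ℝ) - (b i : ℝ) - ∑ t ∈ Icc 1 T, ℓs i t) := by
              ring
            linarith
      have hopt43 : (4/3) * ((w i / (c i : ℝ)) * max ((Dcum d i T : ℝ) - (b i : ℝ)) 0)
          ≤ (4/3) * (transportCost T (w i) (c i) (ℓs i) + penaltyCost T p (b i) (d i) (ℓs i)) := by
        linarith
      linarith [htr i, hpen i, hsc, hopt43]
    have hsum := Finset.sum_le_sum key
    have e2 : ∑ i, ((4/3) * (transportCost T (w i) (c i) (ℓs i) + penaltyCost T p (b i) (d i) (ℓs i))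
          + 3 * p * ((b i : ℝ) + (c i : ℝ)))
        = (4/3) * (∑ i, (transportCost T (w i) (c i) (ℓs i) + penaltyCost T p (b i) (d i) (ℓs i)))
          + ∑ i, 3 * p * ((b i : ℝ) + (c i : ℝ)) := by
      rw [Finset.sum_add_distrib, Finset.mul_sum]
    have hTC : totalCost T w c b p d (fun i t => gpaAlloc b c γ d s i t)
        = ∑ i, (transportCost T (w i) (c i) (gpaAlloc b c γ d s i)
            + penaltyCost T p (b i) (d i) (gpaAlloc b c γ d s i)) := rfl
    have hTCs : totalCost T w c b p d ℓs
        = ∑ i, (transportCost T (w i) (c i) (ℓs i) + penaltyCost T p (b i) (d i) (ℓs i)) := rfl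
    rw [hTC, hTCs]
    linarith [hsum, e2]
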